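/- The multiple zeta series ζ(s₁,…,s_k) = Σ_{n₁>⋯>n_k>0} 1/(n₁^{s₁}⋯n_k^{s_k}) with integer arguments s₁,…,s_k ∈ ℤ converges if s₁+⋯+s_j > j for all j = 1,…,k. -/

import Mathlib

open Finset

private def vext {k : ℕ} (v : Fin k → ℤ) : ℕ → ℤ := fun m => if h : m < k then v ⟨m, h⟩ else 0

-- summability of truncated zeta terms
private lemma lemB (s₀ : ℤ) (hs : 2 ≤ s₀) (p : ℕ → Prop) [DecidablePred p] :
    Summable (fun a : ℕ => if p a then ((a : ℝ) ^ s₀)⁻¹ else 0) := by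
  have hbase : Summable (fun a : ℕ => ((a : ℝ) ^ ((s₀ : ℝ)))⁻¹) :=
    Real.summable_nat_rpow_inv.2 (by exact_mod_cast (by omega : (1:ℤ) < s₀))
  refine Summable.of_nonneg_of_le (fun a => ?_) (fun a => ?_) hbase
  · split <;> positivity
  · split
    · rw [Real.rpow_intCast]
    · positivity

-- telescoping sum
private lemma telescope (N : ℕ) (hN : 1 ≤ N) (M : ℕ) :
    ∑ a ∈ Finset.Ioc N (N + M), (((a : ℝ) - 1)⁻¹ - (a : ℝ)⁻¹)
      = (N : ℝ)⁻¹ - ((N + M : ℕ) : ℝ)⁻¹ := by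
  induction M with
  | zero => simp
  | succ M ih =>
    rw [show N + (M+1) = (N + M) + 1 by ring, Finset.sum_Ioc_succ_top (by omega), ih]
    have : ((N + M + 1 : ℕ) : ℝ) - 1 = ((N + M : ℕ) : ℝ) := by push_cast; ring
    rw [this]
    ring

private lemma lemA (s₀ : ℤ) (hs : 2 ≤ s₀) (N : ℕ) (hN : 1 ≤ N) :
    ∑' a : ℕ, (if N < a then ((a : ℝ) ^ s₀)⁻¹ else 0) ≤ ((N : ℝ) ^ (s₀ - 1))⁻¹ := by
  have hNR : (1 : ℝ) ≤ (N : ℝ) := by exact_mod_cast hN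
  have hNR0 : (0 : ℝ) < (N : ℝ) := by linarith
  set c : ℝ := ((N : ℝ) ^ (s₀ - 2))⁻¹ with hc
  have hc0 : 0 ≤ c := by positivity
  -- per-term bound
  have hterm : ∀ a : ℕ, N < a → ((a : ℝ) ^ s₀)⁻¹ ≤ c * (((a : ℝ) - 1)⁻¹ - (a : ℝ)⁻¹) := by
    intro a ha
    have ha2 : (2 : ℝ) ≤ (a : ℝ) := by exact_mod_cast (by omega : 2 ≤ a)
    have haN : (N : ℝ) ≤ (a : ℝ) := by exact_mod_cast ha.le
    have ha0 : (0 : ℝ) < (a : ℝ) := by linarith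
    have ha1 : (0 : ℝ) < (a : ℝ) - 1 := by linarith
    have hsub : ((a : ℝ) - 1)⁻¹ - (a : ℝ)⁻¹ = (((a:ℝ) - 1) * (a:ℝ))⁻¹ := by
      rw [mul_inv]
      field_simp
      ring
    rw [hsub, hc, ← mul_inv]
    have hkey : (N : ℝ) ^ (s₀ - 2) * (((a:ℝ) - 1) * (a:ℝ)) ≤ (a : ℝ) ^ s₀ := by
      have h1 : (N : ℝ) ^ (s₀ - 2) ≤ (a : ℝ) ^ (s₀ - 2) := by
        have he : s₀ - 2 = ((s₀ - 2).toNat : ℤ) := by omega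
        rw [he, zpow_natCast, zpow_natCast]
        exact pow_le_pow_left₀ (by linarith) haN _
      have h2 : ((a:ℝ) - 1) * (a:ℝ) ≤ (a:ℝ) ^ (2:ℤ) := by
        rw [zpow_two]
        nlinarith
      calc (N : ℝ) ^ (s₀ - 2) * (((a:ℝ) - 1) * (a:ℝ))
          ≤ (a : ℝ) ^ (s₀ - 2) * ((a:ℝ) ^ (2:ℤ)) := by
            apply mul_le_mul h1 h2 (by positivity) (by positivity)
        _ = (a : ℝ) ^ s₀ := by rw [← zpow_add₀ (ne_of_gt ha0)]; ring_nf
    exact inv_anti₀ (by positivity) hkey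
  -- partial sums bounded
  refine Summable.tsum_le_of_sum_le (lemB s₀ hs _) (fun A => ?_)
  calc ∑ a ∈ A, (if N < a then ((a : ℝ) ^ s₀)⁻¹ else 0)
      = ∑ a ∈ A.filter (N < ·), ((a : ℝ) ^ s₀)⁻¹ := (Finset.sum_filter _ _).symm
    _ ≤ ∑ a ∈ A.filter (N < ·), c * (((a : ℝ) - 1)⁻¹ - (a : ℝ)⁻¹) := by
        refine Finset.sum_le_sum (fun a ha => ?_)
        exact hterm a (Finset.mem_filter.1 ha).2
    _ ≤ ∑ a ∈ Finset.Ioc N (N + A.sup id), c * (((a : ℝ) - 1)⁻¹ - (a : ℝ)⁻¹) := by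
        refine Finset.sum_le_sum_of_subset_of_nonneg (fun a ha => ?_) (fun a ha _ => ?_)
        · rcases Finset.mem_filter.1 ha with ⟨haA, haN⟩
          refine Finset.mem_Ioc.2 ⟨haN, ?_⟩
          have : a ≤ A.sup id := Finset.le_sup (f := id) haA
          omega
        · rcases Finset.mem_Ioc.1 ha with ⟨h1, _⟩
          have ha2 : (2 : ℝ) ≤ (a : ℝ) := by exact_mod_cast (by omega : 2 ≤ a)
          have h1' : (0:ℝ) < (a:ℝ) - 1 := by linarith
          have : (a : ℝ)⁻¹ ≤ ((a:ℝ) - 1)⁻¹ := by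
            apply inv_anti₀ h1' (by linarith)
          have := sub_nonneg.2 this
          positivity
    _ = c * ((N : ℝ)⁻¹ - ((N + A.sup id : ℕ) : ℝ)⁻¹) := by
        rw [← Finset.mul_sum, telescope N hN]
    _ ≤ c * (N : ℝ)⁻¹ := by
        refine mul_le_mul_of_nonneg_left ?_ hc0
        have : (0:ℝ) ≤ ((N + A.sup id : ℕ) : ℝ)⁻¹ := by positivity
        linarith
    _ = ((N : ℝ) ^ (s₀ - 1))⁻¹ := by
        rw [hc, ← mul_inv]
        congr 1
        rw [show s₀ - 1 = (s₀ - 2) + 1 by ring, zpow_add₀ (ne_of_gt hNR0)]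
        simp

private def MZP {k : ℕ} (n : Fin k → ℕ) : Prop :=
  (∀ i, 0 < n i) ∧ ∀ i j : Fin k, i < j → n j < n i

open Classical in
private noncomputable def MZF {k : ℕ} (s : Fin k → ℤ) : (Fin k → ℕ) → ℝ :=
  fun n => if MZP n then ∏ i, ((n i : ℝ) ^ (s i))⁻¹ else 0

private lemma MZF_nonneg {k : ℕ} (s : Fin k → ℤ) (n : Fin k → ℕ) : 0 ≤ MZF s n := by
  unfold MZF
  split
  · exact Finset.prod_nonneg (fun i _ => by positivity)
  · exact le_refl _

private lemma MZP_cons {k : ℕ} (a : ℕ) (t : Fin k → ℕ) :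
    MZP (Fin.cons a t) ↔ MZP t ∧ (0 < a ∧ ∀ j, t j < a) := by
  constructor
  · rintro ⟨hpos, hdec⟩
    refine ⟨⟨fun i => ?_, fun i j hij => ?_⟩, ?_, fun j => ?_⟩
    · have := hpos i.succ
      rwa [Fin.cons_succ] at this
    · have := hdec i.succ j.succ (by simpa using hij)
      rwa [Fin.cons_succ, Fin.cons_succ] at this
    · have := hpos 0
      rwa [Fin.cons_zero] at this
    · have := hdec 0 j.succ (Fin.succ_pos j)
      rwa [Fin.cons_zero, Fin.cons_succ] at this
  · rintro ⟨⟨tpos, tdec⟩, ha, hlt⟩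
    constructor
    · intro i
      refine Fin.cases ?_ (fun j => ?_) i
      · rwa [Fin.cons_zero]
      · rw [Fin.cons_succ]; exact tpos j
    · intro i j hij
      induction j using Fin.cases with
      | zero => simp at hij
      | succ j' =>
        rw [Fin.cons_succ]
        induction i using Fin.cases with
        | zero => rw [Fin.cons_zero]; exact hlt j'
        | succ i' =>
          rw [Fin.cons_succ]
          exact tdec i' j' (by simpa using hij)

open Classical in
private lemma MZF_cons {k : ℕ} (s : Fin (k+1) → ℤ) (a : ℕ) (t : Fin k → ℕ) :
    MZF s (Fin.cons a t) =
      MZF (fun i => s i.succ) t * (if (0 < a ∧ ∀ j, t j < a) then ((a : ℝ) ^ (s 0))⁻¹ else 0) := by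
  unfold MZF
  by_cases hQ : MZP t
  · by_cases hC : (0 < a ∧ ∀ j, t j < a)
    · rw [if_pos ((MZP_cons a t).2 ⟨hQ, hC⟩), if_pos hQ, if_pos hC,
        Fin.prod_univ_succ]
      simp only [Fin.cons_zero, Fin.cons_succ]
      ring
    · rw [if_neg (fun h => hC ((MZP_cons a t).1 h).2), if_neg hC, mul_zero]
  · rw [if_neg (fun h => hQ ((MZP_cons a t).1 h).1), if_neg hQ, zero_mul]

private lemma sum_Iic_eq {k : ℕ} (v : Fin k → ℤ) (j : Fin k) :
    ∑ i ∈ Finset.Iic j, v i = ∑ m ∈ Finset.range (j.1 + 1), vext v m := by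
  have h0 : Finset.Iic j = Finset.univ.filter (fun i => i.1 ≤ j.1) := by
    ext i
    simp only [Finset.mem_Iic, Finset.mem_filter, Finset.mem_univ, true_and, Fin.le_def]
  rw [h0, Finset.sum_filter]
  have h1 : ∀ i : Fin k, (if i.1 ≤ j.1 then v i else 0)
      = (fun m => if m ≤ j.1 then vext v m else 0) i.1 := by
    intro i
    simp only [vext, i.isLt, dif_pos, Fin.eta]
  rw [Finset.sum_congr rfl (fun i _ => h1 i),
    Fin.sum_univ_eq_sum_range (fun m => if m ≤ j.1 then vext v m else 0) k]
  rw [← Finset.sum_subset (Finset.range_subset_range.2 (by omega : j.1 + 1 ≤ k))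
    (fun x _ hx => by rw [if_neg (by simp at hx ⊢; omega)])]
  exact Finset.sum_congr rfl (fun m hm => by rw [if_pos (by simp at hm; omega)])

private def myEquiv (k : ℕ) : (Fin (k+1) → ℕ) ≃ ((Fin k → ℕ) × ℕ) where
  toFun n := (Fin.tail n, n 0)
  invFun p := Fin.cons p.2 p.1
  left_inv n := Fin.cons_self_tail n
  right_inv p := by simp

private theorem mzv_aux : ∀ (k : ℕ) (s : Fin k → ℤ),
    (∀ m : ℕ, m < k → (m : ℤ) + 1 < ∑ i ∈ Finset.range (m + 1), vext s i) →
    Summable (MZF s) := by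
  intro k
  induction k with
  | zero => exact fun s _ => Summable.of_finite
  | succ k IH =>
    intro s h
    classical
    have hs0 : 2 ≤ s 0 := by
      have h0 := h 0 (by omega)
      rw [show (0:ℕ)+1 = 1 from rfl, Finset.sum_range_one] at h0
      simp only [vext, Nat.zero_lt_succ, dif_pos, Fin.mk_zero] at h0
      omega
    set G : (Fin k → ℕ) × ℕ → ℝ := fun p => MZF s (Fin.cons p.2 p.1) with hGdef
    have key : Summable G := by
      rw [summable_prod_of_nonneg (fun p => MZF_nonneg s _)]
      constructor
      · intro t
        have hfib : (fun a => G (t, a)) = fun a => MZF (fun i => s i.succ) t *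
            (if (0 < a ∧ ∀ j, t j < a) then ((a : ℝ) ^ (s 0))⁻¹ else 0) :=
          funext fun a => MZF_cons s a t
        rw [hfib]
        exact (lemB (s 0) hs0 _).mul_left _
      · cases k with
        | zero => exact Summable.of_finite
        | succ k' =>
          set s' : Fin (k'+1) → ℤ := Fin.cons (s 0 + s 1 - 1) (fun i => s i.succ.succ)
            with hs'
          have hsum' : ∀ m : ℕ, m < k'+1 →
              (m:ℤ) + 1 < ∑ i ∈ Finset.range (m+1), vext s' i := by
            intro m hm
            have e0 : vext s' 0 = s 0 + s 1 - 1 := by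
              simp only [vext, Nat.zero_lt_succ, dif_pos, hs', Fin.mk_zero, Fin.cons_zero]
            have e1 : ∀ i, i < m → vext s' (i+1) = vext s (i+2) := by
              intro i hi
              have h1 : i + 1 < k' + 1 := by omega
              have h2 : i + 2 < k' + 2 := by omega
              simp only [vext, dif_pos h1, dif_pos h2, hs']
              exact Fin.cons_succ _ _ ⟨i, by omega⟩
            have hrel : ∑ i ∈ Finset.range (m+1), vext s' i
                = ∑ i ∈ Finset.range (m+2), vext s i - 1 := by
              rw [Finset.sum_range_succ', show m+2 = (m+1)+1 from rfl,
                Finset.sum_range_succ', Finset.sum_range_succ',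
                Finset.sum_congr rfl (fun i hi => e1 i (Finset.mem_range.1 hi)), e0]
              have ev0 : vext s 0 = s 0 := by
                simp only [vext, Nat.zero_lt_succ, dif_pos, Fin.mk_zero]
              have ev1 : vext s (0+1) = s 1 := by
                simp only [vext, dif_pos (by omega : 0+1 < k'+2)]
                exact congrArg s (Fin.ext (by simp))
              rw [ev0, ev1]
              ring
            rw [hrel]
            have hh := h (m+1) (by omega)
            rw [show m+1+1 = m+2 from rfl] at hh
            push_cast at hh ⊢
            omega
          have hIH : Summable (MZF s') := IH s' hsum'
          refine Summable.of_nonneg_of_le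
            (fun t => tsum_nonneg (fun a => MZF_nonneg s _))
            (fun t => ?_) hIH
          by_cases ht : MZP t
          · have hpos0 : 0 < t 0 := ht.1 0
            have hmax : ∀ j, t j ≤ t 0 := by
              intro j
              rcases eq_or_ne j 0 with rfl | hj
              · exact le_refl _
              · exact (ht.2 0 j (Fin.pos_of_ne_zero hj)).le
            have hcond : ∀ a : ℕ, (0 < a ∧ ∀ j, t j < a) ↔ t 0 < a := by
              intro a
              constructor
              · rintro ⟨-, h2⟩; exact h2 0
              · intro h1; exact ⟨by omega, fun j => lt_of_le_of_lt (hmax j) h1⟩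
            have ht0R : (0:ℝ) < (t 0 : ℝ) := by exact_mod_cast hpos0
            calc ∑' a, G (t, a)
                = MZF (fun i => s i.succ) t
                    * ∑' a, (if t 0 < a then ((a:ℝ)^(s 0))⁻¹ else 0) := by
                  rw [← tsum_mul_left]
                  exact tsum_congr fun a =>
                    (MZF_cons s a t).trans (by rw [if_congr (hcond a) rfl rfl])
              _ ≤ MZF (fun i => s i.succ) t * ((t 0 : ℝ) ^ (s 0 - 1))⁻¹ :=
                  mul_le_mul_of_nonneg_left (lemA (s 0) hs0 (t 0) hpos0) (MZF_nonneg _ t)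
              _ = MZF s' t := by
                  unfold MZF
                  rw [if_pos ht, if_pos ht, Fin.prod_univ_succ, Fin.prod_univ_succ]
                  simp only [hs', Fin.cons_zero, Fin.cons_succ, Fin.succ_zero_eq_one]
                  rw [show s 0 + s 1 - 1 = s 1 + (s 0 - 1) by ring,
                    zpow_add₀ (ne_of_gt ht0R), mul_inv]
                  ring
          · have hz : ∀ a : ℕ, G (t, a) = 0 := by
              intro a
              show MZF s (Fin.cons a t) = 0
              unfold MZF
              rw [if_neg (fun hP => ht ((MZP_cons a t).1 hP).1)]
            rw [show (∑' a, G (t,a)) = 0 from by rw [tsum_congr hz, tsum_zero]]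
            exact MZF_nonneg s' t
    have heq : MZF s = G ∘ (myEquiv k) := by
      funext n
      show MZF s n = MZF s (Fin.cons (n 0) (Fin.tail n))
      rw [Fin.cons_self_tail]
    rw [heq]
    exact ((myEquiv k).summable_iff).2 key

/-- The multiple zeta series `ζ(s₁,…,s_k) = Σ_{n₁>⋯>n_k>0} 1/(n₁^{s₁}⋯n_k^{s_k})` with integer
arguments converges whenever `s₁+⋯+s_j > j` for all `j = 1,…,k`. -/
theorem mzv_convergent (k : ℕ) (s : Fin k → ℤ)
    (h : ∀ j : Fin k, ((j : ℕ) : ℤ) + 1 < ∑ i ∈ Finset.Iic j, s i) :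
    Summable (fun n : {n : Fin k → ℕ // (∀ i, 0 < n i) ∧ ∀ i j : Fin k, i < j → n j < n i} =>
      ∏ i, ((n.1 i : ℝ) ^ (s i))⁻¹) := by
  have h' : ∀ m : ℕ, m < k → (m : ℤ) + 1 < ∑ i ∈ Finset.range (m+1), vext s i := by
    intro m hm
    have hmm := h ⟨m, hm⟩
    rwa [sum_Iic_eq] at hmm
  have haux := mzv_aux k s h'
  have h1 : Summable (fun n : {n : Fin k → ℕ //
      (∀ i, 0 < n i) ∧ ∀ i j : Fin k, i < j → n j < n i} => MZF s n.1) :=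
    haux.comp_injective Subtype.val_injective
  refine h1.congr (fun n => ?_)
  unfold MZF
  exact if_pos (show MZP n.1 from n.2)
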